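/- Let F be a finite set of function symbols with arities ar, T(F) the ground terms over F, < an irreflexive transitive relation on T(F) containing the subterm relation, and for each f ∈ F a relation <_f on ar(f)-tuples, such that: if f(b) < f(a) then f(b) ≤ a_i for some component a_i of a or b <_f a; and if every component of a tuple a is in the accessible part W(<), then a is in the accessible part W(<_f). Then for every f ∈ F, the predicate A(b) :⇔ [(every component of b is in W(<)) → f(b) ∈ W(<)] is progressive with respect to <_f: for every ar(f)-tuple a, if A(b) holds for every b with b <_f a, then A(a) holds. -/

import Mathlib

/-- Ground terms over a signature `F` with arity function `ar`,
modeled as the W-type of finitely branching trees. -/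
def Term (F : Type) (ar : F → ℕ) : Type := WType (fun f : F => Fin (ar f))

namespace FZaux

variable {F : Type} (ar : F → ℕ)
    (lt : Term F ar → Term F ar → Prop)
    (ltf : ∀ f : F, (Fin (ar f) → Term F ar) → (Fin (ar f) → Term F ar) → Prop)

/-- Tuples all of whose components are accessible. -/
def AccTup (f : F) : Type := {e : Fin (ar f) → Term F ar // ∀ i, Acc lt (e i)}

/-- Coordinate relation on optional stored tuples: `none` is on top. -/
def CoordRel (f : F) : Option (AccTup ar lt f) → Option (AccTup ar lt f) → Prop
  | some u, some v => ltf f u.1 v.1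
  | some _, none => True
  | none, _ => False

/-- The state: for each symbol, optionally a stored tuple. -/
def St : Type := ∀ f : F, Option (AccTup ar lt f)

/-- One coordinate strictly decreases, the others stay equal. -/
def Step (σ' σ : St ar lt) : Prop :=
  ∃ g, CoordRel ar lt ltf g (σ' g) (σ g) ∧ ∀ h, h ≠ g → σ' h = σ h

lemma coordRel_wf
    (hacc : ∀ (f : F) (a : Fin (ar f) → Term F ar),
      (∀ i, Acc lt (a i)) → Acc (ltf f) a) (f : F) :
    WellFounded (CoordRel ar lt ltf f) := by
  have aux : ∀ e : Fin (ar f) → Term F ar, Acc (ltf f) e →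
      ∀ he : ∀ i, Acc lt (e i), Acc (CoordRel ar lt ltf f) (some ⟨e, he⟩) := by
    intro e h
    induction h with
    | intro e _ ih =>
      intro he
      constructor
      rintro (_ | u) hu
      · exact absurd hu (by simp [CoordRel])
      · exact ih u.1 hu u.2
  constructor
  rintro (_ | u)
  · constructor
    rintro (_ | u) hu
    · exact absurd hu (by simp [CoordRel])
    · exact aux u.1 (hacc f u.1 u.2) u.2
  · exact aux u.1 (hacc f u.1 u.2) u.2

lemma step_wf [Fintype F]
    (hacc : ∀ (f : F) (a : Fin (ar f) → Term F ar),
      (∀ i, Acc lt (a i)) → Acc (ltf f) a) :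
    WellFounded (Step ar lt ltf) := by
  letI : LinearOrder F := LinearOrder.lift' (Fintype.equivFin F) (Fintype.equivFin F).injective
  have sub : Subrelation (Step ar lt ltf)
      (Pi.Lex (· < · : F → F → Prop) (fun {i} => CoordRel ar lt ltf i)) := by
    rintro σ' σ ⟨g, hg, hrest⟩
    exact ⟨g, fun j hj => hrest j (ne_of_lt hj), hg⟩
  exact Subrelation.wf sub (Pi.Lex.wellFounded _ (coordRel_wf ar lt ltf hacc))

lemma main [Fintype F] [DecidableEq F]
    (htrans : ∀ s t u, lt s t → lt t u → lt s u)
    (hsub : ∀ (f : F) (a : Fin (ar f) → Term F ar) (i : Fin (ar f)),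
      lt (a i) (WType.mk f a))
    (hdec : ∀ (f : F) (a b : Fin (ar f) → Term F ar),
      lt (WType.mk f b) (WType.mk f a) →
      (∃ i, WType.mk f b = a i ∨ lt (WType.mk f b) (a i)) ∨ ltf f b a)
    (hacc : ∀ (f : F) (a : Fin (ar f) → Term F ar),
      (∀ i, Acc lt (a i)) → Acc (ltf f) a)
    (σ : St ar lt) :
    ∀ (g : F) (c : Fin (ar g) → Term F ar),
      (∀ (g' : F) (e : AccTup ar lt g'), σ g' = some e →
        lt (WType.mk g c) (WType.mk g' e.1)) →
      (∀ i, Acc lt (c i)) → Acc lt (WType.mk g c) := by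
  induction σ using WellFounded.induction (step_wf ar lt ltf hacc) with
  | _ σ IH =>
    intro g c hinv hc
    -- The recursive case: update the state at `g` and recurse.
    have go : Step ar lt ltf (Function.update σ g (some ⟨c, hc⟩)) σ →
        Acc lt (WType.mk g c) := by
      intro hstep
      refine Acc.intro _ fun y => ?_
      induction y with
      | mk h d ihd =>
        intro hy
        have hd : ∀ i, Acc lt (d i) := fun i => ihd i (htrans _ _ _ (hsub h d i) hy)
        refine IH _ hstep h d ?_ hd
        intro g' e' he'
        by_cases hgg : g' = g
        · subst hgg
          erw [Function.update_self] at he'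
          cases he'
          exact hy
        · erw [Function.update_of_ne hgg] at he'
          exact htrans _ _ _ hy (hinv g' e' he')
    cases hσg : σ g with
    | none =>
      refine go ⟨g, ?_, fun h hne => Function.update_of_ne hne _ _⟩
      erw [Function.update_self, hσg]
      simp [CoordRel]
    | some e =>
      rcases hdec g e.1 c (hinv g e hσg) with ⟨i, h | h⟩ | hl
      · exact h ▸ e.2 i
      · exact Acc.inv (e.2 i) h
      · refine go ⟨g, ?_, fun h hne => Function.update_of_ne hne _ _⟩
        erw [Function.update_self, hσg]
        exact hl

end FZaux

theorem ferreira_zantema_progressive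
    {F : Type} [Fintype F] (ar : F → ℕ)
    (lt : Term F ar → Term F ar → Prop)
    (ltf : ∀ f : F, (Fin (ar f) → Term F ar) → (Fin (ar f) → Term F ar) → Prop)
    (hirr : ∀ t, ¬ lt t t)
    (htrans : ∀ s t u, lt s t → lt t u → lt s u)
    (hsub : ∀ (f : F) (a : Fin (ar f) → Term F ar) (i : Fin (ar f)),
      lt (a i) (WType.mk f a))
    (hdec : ∀ (f : F) (a b : Fin (ar f) → Term F ar),
      lt (WType.mk f b) (WType.mk f a) →
      (∃ i, WType.mk f b = a i ∨ lt (WType.mk f b) (a i)) ∨ ltf f b a)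
    (hacc : ∀ (f : F) (a : Fin (ar f) → Term F ar),
      (∀ i, Acc lt (a i)) → Acc (ltf f) a) :
    ∀ (f : F) (a : Fin (ar f) → Term F ar),
      (∀ b : Fin (ar f) → Term F ar, ltf f b a →
        ((∀ i, Acc lt (b i)) → Acc lt (WType.mk f b))) →
      ((∀ i, Acc lt (a i)) → Acc lt (WType.mk f a)) := by
  intro f a _ ha
  haveI : DecidableEq F := Classical.decEq F
  exact FZaux.main ar lt ltf htrans hsub hdec hacc (fun _ => none) f a
    (fun g' e' he' => by cases he') ha
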